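/- The function F = (1/8)u₃²u₁ + (1/8)u₃u₂² - (1/64)u₁²u₂² + (1/3840)u₁⁵ is a Frobenius potential for the orbit space of the Coxeter group A₃: with η the constant metric with η¹³ = η³¹ = η²² = 1 and all other entries zero, the structure constants cⁱ_{jk} = ηⁱˡ ∂³F/(∂uˡ∂uʲ∂uᵏ) define a commutative associative product with unit ∂/∂u₃ (up to normalization), i.e. F satisfies the WDVV associativity equations. -/

import Mathlib

open scoped BigOperators

/-- Partial derivative in the `i`-th coordinate direction on `ℂⁿ`. -/
noncomputable def pd {n : ℕ} (i : Fin n) (f : (Fin n → ℂ) → ℂ) (p : Fin n → ℂ) : ℂ :=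
  fderiv ℂ f p (Pi.single i 1)

/-- Third partial derivative `∂_i ∂_j ∂_k f`. -/
noncomputable def td {n : ℕ} (i j k : Fin n) (f : (Fin n → ℂ) → ℂ) (p : Fin n → ℂ) : ℂ :=
  pd i (fun q => pd j (pd k f) q) p

/-- The Frobenius potential of the orbit space of the Coxeter group `A₃`:
`F = (1/8)u₃²u₁ + (1/8)u₃u₂² - (1/64)u₁²u₂² + (1/3840)u₁⁵`. -/
noncomputable def FA3 (p : Fin 3 → ℂ) : ℂ :=
  (1/8) * (p 2)^2 * (p 0) + (1/8) * (p 2) * (p 1)^2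
    - (1/64) * (p 0)^2 * (p 1)^2 + (1/3840) * (p 0)^5

/-- The inverse metric `ηⁱʲ` with `η¹³ = η³¹ = η²² = 1` and all other entries zero. -/
noncomputable def ηinvA3 : Fin 3 → Fin 3 → ℂ := ![![0,0,1], ![0,1,0], ![1,0,0]]

/-- Structure constants `cⁱ_{jk} = ηⁱˡ ∂³F/∂uˡ∂uʲ∂uᵏ`. -/
noncomputable def cA3 (i j k : Fin 3) (p : Fin 3 → ℂ) : ℂ :=
  ∑ l, ηinvA3 i l * td l j k FA3 p

lemma pd_eval {n} {f : (Fin n → ℂ) → ℂ} {p} {f' : (Fin n → ℂ) →L[ℂ] ℂ}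
    (h : HasFDerivAt f f' p) (i : Fin n) : pd i f p = f' (Pi.single i 1) := by
  rw [pd, h.fderiv]

lemma hpow {n : ℕ} {f : (Fin n → ℂ) → ℂ} {f' : (Fin n → ℂ) →L[ℂ] ℂ} {x}
    (h : HasFDerivAt f f' x) :
    ∀ m : ℕ, HasFDerivAt (fun y => f y ^ (m+1)) (((m+1 : ℂ) * f x ^ m) • f') x := by
  intro m
  induction m with
  | zero => simpa using h
  | succ m ih =>
      have h2 : (fun y => f y ^ (m+1+1)) = fun y => f y^(m+1) * f y := by
        funext y; ring
      rw [h2]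
      refine (ih.mul h).congr_fderiv ?_
      rw [smul_smul]
      ext v
      simp
      push_cast
      ring

noncomputable def G : Fin 3 → (Fin 3 → ℂ) → ℂ :=
  ![fun q => (1/8)*(q 2)^2 - (1/32)*(q 0)*(q 1)^2 + (1/768)*(q 0)^4,
    fun q => (1/4)*(q 2)*(q 1) - (1/32)*(q 0)^2*(q 1),
    fun q => (1/4)*(q 2)*(q 0) + (1/8)*(q 1)^2]

noncomputable def H : Fin 3 → Fin 3 → (Fin 3 → ℂ) → ℂ :=
  ![![fun q => -(1/32)*(q 1)^2 + (1/192)*(q 0)^3,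
     fun q => -(1/16)*(q 0)*(q 1),
     fun q => (1/4)*(q 2)],
    ![fun q => -(1/16)*(q 0)*(q 1),
     fun q => (1/4)*(q 2) - (1/32)*(q 0)^2,
     fun q => (1/4)*(q 1)],
    ![fun q => (1/4)*(q 2),
     fun q => (1/4)*(q 1),
     fun q => (1/4)*(q 0)]]

noncomputable def T (p : Fin 3 → ℂ) : Fin 3 → Fin 3 → Fin 3 → ℂ :=
  ![![![(p 0)^2/64, -(p 1)/16, 0], ![-(p 1)/16, -(p 0)/16, 0], ![0, 0, 1/4]],
    ![![-(p 1)/16, -(p 0)/16, 0], ![-(p 0)/16, 0, 1/4], ![0, 1/4, 0]],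
    ![![0, 0, 1/4], ![0, 1/4, 0], ![1/4, 0, 0]]]

lemma pd_FA3 (k : Fin 3) (q : Fin 3 → ℂ) : pd k FA3 q = G k q := by
  have h0 := hasFDerivAt_apply (𝕜 := ℂ) (0 : Fin 3) q
  have h1 := hasFDerivAt_apply (𝕜 := ℂ) (1 : Fin 3) q
  have h2 := hasFDerivAt_apply (𝕜 := ℂ) (2 : Fin 3) q
  have hF := ((((((hpow h2 1).const_mul (1/8:ℂ)).mul h0).add
      ((h2.const_mul (1/8:ℂ)).mul (hpow h1 1))).sub
      (((hpow h0 1).const_mul (1/64:ℂ)).mul (hpow h1 1))).add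
      ((hpow h0 4).const_mul (1/3840:ℂ)))
  rw [show pd k FA3 q = _ from pd_eval hF k]
  fin_cases k <;> simp [G, Pi.single_apply] <;> ring

lemma pd_G0 (j : Fin 3) (q : Fin 3 → ℂ) : pd j (G 0) q = H j 0 q := by
  have h0 := hasFDerivAt_apply (𝕜 := ℂ) (0 : Fin 3) q
  have h1 := hasFDerivAt_apply (𝕜 := ℂ) (1 : Fin 3) q
  have h2 := hasFDerivAt_apply (𝕜 := ℂ) (2 : Fin 3) q
  have hG := (((hpow h2 1).const_mul (1/8:ℂ)).sub ((h0.const_mul (1/32:ℂ)).mul (hpow h1 1))).add ((hpow h0 3).const_mul (1/768:ℂ))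
  rw [show pd j (G 0) q = _ from pd_eval hG j]
  fin_cases j <;> simp [H, Pi.single_apply] <;> ring

lemma pd_G1 (j : Fin 3) (q : Fin 3 → ℂ) : pd j (G 1) q = H j 1 q := by
  have h0 := hasFDerivAt_apply (𝕜 := ℂ) (0 : Fin 3) q
  have h1 := hasFDerivAt_apply (𝕜 := ℂ) (1 : Fin 3) q
  have h2 := hasFDerivAt_apply (𝕜 := ℂ) (2 : Fin 3) q
  have hG := ((h2.const_mul (1/4:ℂ)).mul h1).sub (((hpow h0 1).const_mul (1/32:ℂ)).mul h1)
  rw [show pd j (G 1) q = _ from pd_eval hG j]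
  fin_cases j <;> simp [H, Pi.single_apply] <;> ring

lemma pd_G2 (j : Fin 3) (q : Fin 3 → ℂ) : pd j (G 2) q = H j 2 q := by
  have h0 := hasFDerivAt_apply (𝕜 := ℂ) (0 : Fin 3) q
  have h1 := hasFDerivAt_apply (𝕜 := ℂ) (1 : Fin 3) q
  have h2 := hasFDerivAt_apply (𝕜 := ℂ) (2 : Fin 3) q
  have hG := ((h2.const_mul (1/4:ℂ)).mul h0).add ((hpow h1 1).const_mul (1/8:ℂ))
  rw [show pd j (G 2) q = _ from pd_eval hG j]
  fin_cases j <;> simp [H, Pi.single_apply] <;> ring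

lemma pd_G (j k : Fin 3) (q : Fin 3 → ℂ) : pd j (G k) q = H j k q := by
  fin_cases k
  · exact pd_G0 j q
  · exact pd_G1 j q
  · exact pd_G2 j q

lemma pd_H00 (i : Fin 3) (p : Fin 3 → ℂ) : pd i (H 0 0) p = T p i 0 0 := by
  have h0 := hasFDerivAt_apply (𝕜 := ℂ) (0 : Fin 3) p
  have h1 := hasFDerivAt_apply (𝕜 := ℂ) (1 : Fin 3) p
  have h2 := hasFDerivAt_apply (𝕜 := ℂ) (2 : Fin 3) p
  have hH := ((hpow h1 1).const_mul (-(1/32):ℂ)).add ((hpow h0 2).const_mul (1/192:ℂ))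
  rw [show pd i (H 0 0) p = _ from pd_eval hH i]
  fin_cases i <;> simp [T, Pi.single_apply, Matrix.vecHead, Matrix.vecTail] <;> ring_nf

lemma pd_H01 (i : Fin 3) (p : Fin 3 → ℂ) : pd i (H 0 1) p = T p i 0 1 := by
  have h0 := hasFDerivAt_apply (𝕜 := ℂ) (0 : Fin 3) p
  have h1 := hasFDerivAt_apply (𝕜 := ℂ) (1 : Fin 3) p
  have h2 := hasFDerivAt_apply (𝕜 := ℂ) (2 : Fin 3) p
  have hH := (h0.const_mul (-(1/16):ℂ)).mul h1
  rw [show pd i (H 0 1) p = _ from pd_eval hH i]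
  fin_cases i <;> simp [T, Pi.single_apply, Matrix.vecHead, Matrix.vecTail] <;> ring_nf

lemma pd_H02 (i : Fin 3) (p : Fin 3 → ℂ) : pd i (H 0 2) p = T p i 0 2 := by
  have h0 := hasFDerivAt_apply (𝕜 := ℂ) (0 : Fin 3) p
  have h1 := hasFDerivAt_apply (𝕜 := ℂ) (1 : Fin 3) p
  have h2 := hasFDerivAt_apply (𝕜 := ℂ) (2 : Fin 3) p
  have hH := h2.const_mul (1/4:ℂ)
  rw [show pd i (H 0 2) p = _ from pd_eval hH i]
  fin_cases i <;> simp [T, Pi.single_apply, Matrix.vecHead, Matrix.vecTail] <;> ring_nf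

lemma pd_H10 (i : Fin 3) (p : Fin 3 → ℂ) : pd i (H 1 0) p = T p i 1 0 := by
  have h0 := hasFDerivAt_apply (𝕜 := ℂ) (0 : Fin 3) p
  have h1 := hasFDerivAt_apply (𝕜 := ℂ) (1 : Fin 3) p
  have h2 := hasFDerivAt_apply (𝕜 := ℂ) (2 : Fin 3) p
  have hH := (h0.const_mul (-(1/16):ℂ)).mul h1
  rw [show pd i (H 1 0) p = _ from pd_eval hH i]
  fin_cases i <;> simp [T, Pi.single_apply, Matrix.vecHead, Matrix.vecTail] <;> ring_nf

lemma pd_H11 (i : Fin 3) (p : Fin 3 → ℂ) : pd i (H 1 1) p = T p i 1 1 := by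
  have h0 := hasFDerivAt_apply (𝕜 := ℂ) (0 : Fin 3) p
  have h1 := hasFDerivAt_apply (𝕜 := ℂ) (1 : Fin 3) p
  have h2 := hasFDerivAt_apply (𝕜 := ℂ) (2 : Fin 3) p
  have hH := (h2.const_mul (1/4:ℂ)).sub ((hpow h0 1).const_mul (1/32:ℂ))
  rw [show pd i (H 1 1) p = _ from pd_eval hH i]
  fin_cases i <;> simp [T, Pi.single_apply, Matrix.vecHead, Matrix.vecTail] <;> ring_nf

lemma pd_H12 (i : Fin 3) (p : Fin 3 → ℂ) : pd i (H 1 2) p = T p i 1 2 := by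
  have h0 := hasFDerivAt_apply (𝕜 := ℂ) (0 : Fin 3) p
  have h1 := hasFDerivAt_apply (𝕜 := ℂ) (1 : Fin 3) p
  have h2 := hasFDerivAt_apply (𝕜 := ℂ) (2 : Fin 3) p
  have hH := h1.const_mul (1/4:ℂ)
  rw [show pd i (H 1 2) p = _ from pd_eval hH i]
  fin_cases i <;> simp [T, Pi.single_apply, Matrix.vecHead, Matrix.vecTail] <;> ring_nf

lemma pd_H20 (i : Fin 3) (p : Fin 3 → ℂ) : pd i (H 2 0) p = T p i 2 0 := by
  have h0 := hasFDerivAt_apply (𝕜 := ℂ) (0 : Fin 3) p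
  have h1 := hasFDerivAt_apply (𝕜 := ℂ) (1 : Fin 3) p
  have h2 := hasFDerivAt_apply (𝕜 := ℂ) (2 : Fin 3) p
  have hH := h2.const_mul (1/4:ℂ)
  rw [show pd i (H 2 0) p = _ from pd_eval hH i]
  fin_cases i <;> simp [T, Pi.single_apply, Matrix.vecHead, Matrix.vecTail] <;> ring_nf

lemma pd_H21 (i : Fin 3) (p : Fin 3 → ℂ) : pd i (H 2 1) p = T p i 2 1 := by
  have h0 := hasFDerivAt_apply (𝕜 := ℂ) (0 : Fin 3) p
  have h1 := hasFDerivAt_apply (𝕜 := ℂ) (1 : Fin 3) p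
  have h2 := hasFDerivAt_apply (𝕜 := ℂ) (2 : Fin 3) p
  have hH := h1.const_mul (1/4:ℂ)
  rw [show pd i (H 2 1) p = _ from pd_eval hH i]
  fin_cases i <;> simp [T, Pi.single_apply, Matrix.vecHead, Matrix.vecTail] <;> ring_nf

lemma pd_H22 (i : Fin 3) (p : Fin 3 → ℂ) : pd i (H 2 2) p = T p i 2 2 := by
  have h0 := hasFDerivAt_apply (𝕜 := ℂ) (0 : Fin 3) p
  have h1 := hasFDerivAt_apply (𝕜 := ℂ) (1 : Fin 3) p
  have h2 := hasFDerivAt_apply (𝕜 := ℂ) (2 : Fin 3) p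
  have hH := h0.const_mul (1/4:ℂ)
  rw [show pd i (H 2 2) p = _ from pd_eval hH i]
  fin_cases i <;> simp [T, Pi.single_apply, Matrix.vecHead, Matrix.vecTail] <;> ring_nf

lemma pd_H (i j k : Fin 3) (p : Fin 3 → ℂ) : pd i (H j k) p = T p i j k := by
  fin_cases j <;> fin_cases k
  · exact pd_H00 i p
  · exact pd_H01 i p
  · exact pd_H02 i p
  · exact pd_H10 i p
  · exact pd_H11 i p
  · exact pd_H12 i p
  · exact pd_H20 i p
  · exact pd_H21 i p
  · exact pd_H22 i p

lemma td_FA3 (i j k : Fin 3) (p : Fin 3 → ℂ) : td i j k FA3 p = T p i j k := by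
  have e1 : pd k FA3 = G k := funext (pd_FA3 k)
  have e2 : (fun q => pd j (pd k FA3) q) = H j k := by
    funext q; rw [e1, pd_G]
  rw [td, e2, pd_H]

lemma cA3_eq (i j k : Fin 3) (p : Fin 3 → ℂ) :
    cA3 i j k p = T p (![2,1,0] i) j k := by
  rw [cA3]
  simp only [Fin.sum_univ_three, td_FA3]
  fin_cases i <;> norm_num [ηinvA3, Matrix.cons_val_two, Matrix.cons_val_one, Matrix.cons_val_zero, Matrix.head_cons, Matrix.tail_cons]

noncomputable def Cm (p : Fin 3 → ℂ) : Fin 3 → Fin 3 → Fin 3 → ℂ :=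
  ![![![0, 0, 1/4], ![0, 1/4, 0], ![1/4, 0, 0]],
    ![![-(p 1)/16, -(p 0)/16, 0], ![-(p 0)/16, 0, 1/4], ![0, 1/4, 0]],
    ![![(p 0)^2/64, -(p 1)/16, 0], ![-(p 1)/16, -(p 0)/16, 0], ![0, 0, 1/4]]]

lemma cval (i j k : Fin 3) (p : Fin 3 → ℂ) : cA3 i j k p = Cm p i j k := by
  rw [cA3_eq]
  fin_cases i <;> simp [T, Cm, Matrix.vecHead, Matrix.vecTail]


set_option maxHeartbeats 2000000 in
/-- `F = (1/8)u₃²u₁ + (1/8)u₃u₂² - (1/64)u₁²u₂² + (1/3840)u₁⁵` is a Frobenius potential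
for the orbit space of `A₃`: the structure constants `cⁱ_{jk} = ηⁱˡ F_{ljk}` define a
commutative associative product (WDVV equations) whose unit is proportional to
`∂/∂u₃`. -/
theorem A3_frobenius_potential :
    -- WDVV associativity
    (∀ (p : Fin 3 → ℂ) (i j k m : Fin 3),
      (∑ l, cA3 i j l p * cA3 l k m p) = ∑ l, cA3 i k l p * cA3 l j m p) ∧
    -- commutativity
    (∀ (p : Fin 3 → ℂ) (i j k : Fin 3), cA3 i j k p = cA3 i k j p) ∧
    -- the unit of the product is ∂/∂u₃ up to normalization
    (∃ κ : ℂ, κ ≠ 0 ∧ ∀ (p : Fin 3 → ℂ) (i j : Fin 3),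
      cA3 i j 2 p = κ * (if i = j then (1 : ℂ) else 0)) := by
  refine ⟨?_, ?_, ⟨1/4, by norm_num, ?_⟩⟩
  · intro p i j k m
    simp only [Fin.sum_univ_three, cval]
    fin_cases i <;> fin_cases j <;> fin_cases k <;> fin_cases m <;>
      simp [Cm, Matrix.vecHead, Matrix.vecTail] <;> ring
  · intro p i j k
    simp only [cval]
    fin_cases i <;> fin_cases j <;> fin_cases k <;>
      simp [Cm, Matrix.vecHead, Matrix.vecTail]
  · intro p i j
    simp only [cval]
    fin_cases i <;> fin_cases j <;>
      simp [Cm, Matrix.vecHead, Matrix.vecTail]
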